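/- arXiv:2202.07378 — 2 statements merged into one kernel-verified Lean document; each statement's English description precedes it below -/
import Mathlib

section
/- Let A be the coupling matrix A[n,l] = E[Σ^K(Θ)² p̄_{φ(n)}(Θ) p̄_{φ(l)}(Θ)] with orthonormal polynomials p̄_α. If the random variable Σ^K(Θ)² is bounded below by a constant c > 0 almost surely, then all eigenvalues of A are at least c; in particular A is positive definite and the stochastic Galerkin system is parabolic. -/
open MeasureTheory
open Matrix

theorem stmt7 (L K : ℕ) {Ω : Type*} [MeasurableSpace Ω] (μ : Measure Ω) [IsProbabilityMeasure μ]
    (Θ : Ω → (Fin L → ℝ)) (p : (Fin L → ℕ) → (Fin L → ℝ) → ℝ)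
    (honb : ∀ α β : Fin L → ℕ,
      ∫ ω, p α (Θ ω) * p β (Θ ω) ∂μ = if α = β then 1 else 0)
    (hintp : ∀ α β : Fin L → ℕ, Integrable (fun ω => p α (Θ ω) * p β (Θ ω)) μ)
    (σ : (Fin L → ℕ) → ℝ) (m : ℕ) (φ : Fin m → (Fin L → ℕ)) (hφ : Function.Injective φ)
    (SigK : Ω → ℝ)
    (hSigK : ∀ ω, SigK ω = ∑ α ∈ (Fintype.piFinset fun _ : Fin L => Finset.range (K + 1)).filter
        (fun α => ∑ i, α i ≤ K), σ α * p α (Θ ω))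
    (A : Matrix (Fin m) (Fin m) ℝ)
    (hA : ∀ n l, A n l = ∫ ω, (SigK ω) ^ 2 * p (φ n) (Θ ω) * p (φ l) (Θ ω) ∂μ)
    (hint : ∀ n l, Integrable (fun ω => (SigK ω) ^ 2 * p (φ n) (Θ ω) * p (φ l) (Θ ω)) μ)
    (c : ℝ) (hc : 0 < c) (hbound : ∀ᵐ ω ∂μ, c ≤ (SigK ω) ^ 2) :
    (∀ t : ℝ, Module.End.HasEigenvalue (Matrix.toLin' A) t → c ≤ t) ∧ A.PosDef := by
  -- pointwise expansions
  have hsq : ∀ (x : Fin m → ℝ) (ω : Ω),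
      (∑ n, x n * p (φ n) (Θ ω)) ^ 2
        = ∑ n, ∑ l, (x n * x l) * (p (φ n) (Θ ω) * p (φ l) (Θ ω)) := by
    intro x ω
    rw [sq, Finset.sum_mul_sum]
    exact Finset.sum_congr rfl fun n _ => Finset.sum_congr rfl fun l _ => by ring
  have hssq : ∀ (x : Fin m → ℝ) (ω : Ω),
      SigK ω ^ 2 * (∑ n, x n * p (φ n) (Θ ω)) ^ 2
        = ∑ n, ∑ l, (x n * x l) * (SigK ω ^ 2 * p (φ n) (Θ ω) * p (φ l) (Θ ω)) := by
    intro x ω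
    rw [hsq, Finset.mul_sum]
    refine Finset.sum_congr rfl fun n _ => ?_
    rw [Finset.mul_sum]
    exact Finset.sum_congr rfl fun l _ => by ring
  -- integrability
  have hfin2 : ∀ x : Fin m → ℝ,
      Integrable (fun ω => (∑ n, x n * p (φ n) (Θ ω)) ^ 2) μ := by
    intro x
    have : (fun ω => (∑ n, x n * p (φ n) (Θ ω)) ^ 2)
        = fun ω => ∑ n, ∑ l, (x n * x l) * (p (φ n) (Θ ω) * p (φ l) (Θ ω)) :=
      funext fun ω => hsq x ω
    rw [this]
    exact integrable_finset_sum _ fun n _ => integrable_finset_sum _ fun l _ =>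
      (hintp (φ n) (φ l)).const_mul _
  have hgin : ∀ x : Fin m → ℝ,
      Integrable (fun ω => SigK ω ^ 2 * (∑ n, x n * p (φ n) (Θ ω)) ^ 2) μ := by
    intro x
    have : (fun ω => SigK ω ^ 2 * (∑ n, x n * p (φ n) (Θ ω)) ^ 2)
        = fun ω => ∑ n, ∑ l, (x n * x l) * (SigK ω ^ 2 * p (φ n) (Θ ω) * p (φ l) (Θ ω)) :=
      funext fun ω => hssq x ω
    rw [this]
    exact integrable_finset_sum _ fun n _ => integrable_finset_sum _ fun l _ =>
      (hint n l).const_mul _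
  -- ∫ f² = ∑ xₙ²
  have hI2 : ∀ x : Fin m → ℝ,
      ∫ ω, (∑ n, x n * p (φ n) (Θ ω)) ^ 2 ∂μ = ∑ n, x n ^ 2 := by
    intro x
    have h1 : ∫ ω, (∑ n, x n * p (φ n) (Θ ω)) ^ 2 ∂μ
        = ∑ n, ∑ l, (x n * x l) * ∫ ω, p (φ n) (Θ ω) * p (φ l) (Θ ω) ∂μ := by
      rw [show (fun ω => (∑ n, x n * p (φ n) (Θ ω)) ^ 2)
          = fun ω => ∑ n, ∑ l, (x n * x l) * (p (φ n) (Θ ω) * p (φ l) (Θ ω)) from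
          funext fun ω => hsq x ω]
      rw [integral_finset_sum _ fun n _ => integrable_finset_sum _ fun l _ =>
        (hintp (φ n) (φ l)).const_mul _]
      refine Finset.sum_congr rfl fun n _ => ?_
      rw [integral_finset_sum _ fun l _ => (hintp (φ n) (φ l)).const_mul _]
      exact Finset.sum_congr rfl fun l _ => integral_const_mul _ _
    rw [h1]
    simp only [honb, hφ.eq_iff, mul_ite, mul_one, mul_zero, Finset.sum_ite_eq,
      Finset.mem_univ, if_true, sq]
  -- quadratic form
  have hquad : ∀ x : Fin m → ℝ,
      x ⬝ᵥ A.mulVec x = ∫ ω, SigK ω ^ 2 * (∑ n, x n * p (φ n) (Θ ω)) ^ 2 ∂μ := by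
    intro x
    have h1 : ∫ ω, SigK ω ^ 2 * (∑ n, x n * p (φ n) (Θ ω)) ^ 2 ∂μ
        = ∑ n, ∑ l, (x n * x l) * A n l := by
      rw [show (fun ω => SigK ω ^ 2 * (∑ n, x n * p (φ n) (Θ ω)) ^ 2)
          = fun ω => ∑ n, ∑ l, (x n * x l) * (SigK ω ^ 2 * p (φ n) (Θ ω) * p (φ l) (Θ ω)) from
          funext fun ω => hssq x ω]
      rw [integral_finset_sum _ fun n _ => integrable_finset_sum _ fun l _ =>
        (hint n l).const_mul _]
      refine Finset.sum_congr rfl fun n _ => ?_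
      rw [integral_finset_sum _ fun l _ => (hint n l).const_mul _]
      refine Finset.sum_congr rfl fun l _ => ?_
      rw [integral_const_mul, hA]
    rw [h1]
    simp only [dotProduct, Matrix.mulVec, Finset.mul_sum]
    refine Finset.sum_congr rfl fun n _ => Finset.sum_congr rfl fun l _ => ?_
    ring
  -- key inequality
  have key : ∀ x : Fin m → ℝ, c * ∑ n, x n ^ 2 ≤ x ⬝ᵥ A.mulVec x := by
    intro x
    rw [hquad x, ← hI2 x, ← integral_const_mul]
    refine integral_mono_ae ((hfin2 x).const_mul c) (hgin x) ?_
    filter_upwards [hbound] with ω hω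
    exact mul_le_mul_of_nonneg_right hω (sq_nonneg _)
  have hsumpos : ∀ x : Fin m → ℝ, x ≠ 0 → 0 < ∑ n, x n ^ 2 := by
    intro x hx
    obtain ⟨i, hi⟩ : ∃ i, x i ≠ 0 := by
      by_contra h; push_neg at h; exact hx (funext h)
    exact Finset.sum_pos' (fun n _ => sq_nonneg _)
      ⟨i, Finset.mem_univ i, by positivity⟩
  constructor
  · intro t ht
    obtain ⟨v, hv⟩ := ht.exists_hasEigenvector
    have hv0 : v ≠ 0 := hv.right
    have heq : A.mulVec v = t • v := by
      have := hv.apply_eq_smul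
      rwa [Matrix.toLin'_apply] at this
    have h1 : v ⬝ᵥ A.mulVec v = t * ∑ n, v n ^ 2 := by
      rw [heq]
      simp [dotProduct, Finset.mul_sum, sq, mul_comm, mul_left_comm]
    have := key v
    rw [h1] at this
    have hS := hsumpos v hv0
    exact le_of_mul_le_mul_right (by linarith [this]) hS
  · refine Matrix.posDef_iff_dotProduct_mulVec.mpr ⟨?_, ?_⟩
    · refine Matrix.IsHermitian.ext fun i j => ?_
      simp only [RCLike.star_def, starRingEnd_apply, star_trivial]
      rw [hA, hA]
      exact integral_congr_ae (Filter.Eventually.of_forall fun ω => by ring)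
    · intro x hx
      have h := key x
      have : (0:ℝ) < c * ∑ n, x n ^ 2 := mul_pos hc (hsumpos x hx)
      calc (0:ℝ) < c * ∑ n, x n ^ 2 := this
        _ ≤ x ⬝ᵥ A.mulVec x := h
        _ = star x ⬝ᵥ A.mulVec x := by simp
end

section
/- For each fixed volatility σ > 0, interest rate r, strike E > 0 and maturity T, the function V(S,t) = S·N(d₁) − E·e^{−r(T−t)}·N(d₂) with d₁ = (ln(S/E) + (r + σ²/2)(T−t))/(σ√(T−t)), d₂ = d₁ − σ√(T−t) and N the standard normal CDF, satisfies the Black Scholes PDE ∂_t V + (1/2)σ²S² ∂_S² V + rS ∂_S V − rV = 0 for S > 0 and t < T. -/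
open MeasureTheory Real

noncomputable def normalCDF (x : ℝ) : ℝ :=
  (Real.sqrt (2 * Real.pi))⁻¹ * ∫ u in Set.Iic x, Real.exp (-u ^ 2 / 2)

noncomputable def bsCall (σ r Ek T : ℝ) (S t : ℝ) : ℝ :=
  S * normalCDF ((Real.log (S / Ek) + (r + σ ^ 2 / 2) * (T - t)) / (σ * Real.sqrt (T - t)))
    - Ek * Real.exp (-r * (T - t)) *
      normalCDF ((Real.log (S / Ek) + (r + σ ^ 2 / 2) * (T - t)) / (σ * Real.sqrt (T - t))
        - σ * Real.sqrt (T - t))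

noncomputable def nPDF (x : ℝ) : ℝ := (Real.sqrt (2 * Real.pi))⁻¹ * Real.exp (-x ^ 2 / 2)

lemma integrable_gauss : Integrable (fun u : ℝ => Real.exp (-u ^ 2 / 2)) := by
  have h := integrable_exp_neg_mul_sq (b := (1/2 : ℝ)) (by norm_num)
  convert h using 2 with u
  ring_nf

lemma hasDerivAt_normalCDF (x : ℝ) : HasDerivAt normalCDF (nPDF x) x := by
  have hint := integrable_gauss
  have hcont : Continuous (fun u : ℝ => Real.exp (-u ^ 2 / 2)) := by continuity
  have h1 : ∀ y : ℝ, (∫ u in Set.Iic y, Real.exp (-u^2/2))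
      = (∫ u in Set.Iic 0, Real.exp (-u^2/2)) + ∫ u in (0:ℝ)..y, Real.exp (-u^2/2) := by
    intro y
    rw [← intervalIntegral.integral_Iic_sub_Iic hint.integrableOn hint.integrableOn]
    ring
  have h2 : HasDerivAt (fun y : ℝ => ∫ u in (0:ℝ)..y, Real.exp (-u^2/2))
      (Real.exp (-x^2/2)) x :=
    intervalIntegral.integral_hasDerivAt_right hint.intervalIntegrable
      (hcont.stronglyMeasurableAtFilter _ _) hcont.continuousAt
  have h3 : HasDerivAt (fun y : ℝ => ∫ u in Set.Iic y, Real.exp (-u^2/2))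
      (Real.exp (-x^2/2)) x := by
    have he : (fun y : ℝ => ∫ u in Set.Iic y, Real.exp (-u^2/2))
        = fun y => (∫ u in Set.Iic 0, Real.exp (-u^2/2)) + ∫ u in (0:ℝ)..y, Real.exp (-u^2/2) :=
      funext h1
    rw [he]
    exact h2.const_add _
  unfold normalCDF nPDF
  exact h3.const_mul _

lemma key (σ r Ek τ S : ℝ) (hσ : 0 < σ) (hE : 0 < Ek) (hτ : 0 < τ) (hS : 0 < S) :
    S * nPDF ((Real.log (S/Ek) + (r + σ^2/2)*τ)/(σ*Real.sqrt τ))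
    = Ek * Real.exp (-r*τ)
      * nPDF ((Real.log (S/Ek) + (r + σ^2/2)*τ)/(σ*Real.sqrt τ) - σ*Real.sqrt τ) := by
  set sτ := Real.sqrt τ with hsτdef
  have hsτ : 0 < sτ := Real.sqrt_pos.2 hτ
  have hsτ2 : sτ^2 = τ := Real.sq_sqrt hτ.le
  have ha : σ * sτ ≠ 0 := by positivity
  set d1 := (Real.log (S/Ek) + (r + σ^2/2)*τ)/(σ*sτ) with hd1def
  have hd1 : d1 * (σ * sτ) = Real.log S - Real.log Ek + (r + σ^2/2)*τ := by
    rw [hd1def, div_mul_cancel₀ _ ha, Real.log_div hS.ne' hE.ne']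
  unfold nPDF
  rw [show S * ((Real.sqrt (2*Real.pi))⁻¹ * Real.exp (-d1^2/2))
      = (Real.sqrt (2*Real.pi))⁻¹ * (S * Real.exp (-d1^2/2)) by ring,
    show Ek * Real.exp (-r*τ) * ((Real.sqrt (2*Real.pi))⁻¹ * Real.exp (-(d1 - σ*sτ)^2/2))
      = (Real.sqrt (2*Real.pi))⁻¹ * (Ek * (Real.exp (-r*τ) * Real.exp (-(d1-σ*sτ)^2/2))) by ring]
  congr 1
  rw [← Real.exp_log hS, ← Real.exp_log hE, ← Real.exp_add, ← Real.exp_add, ← Real.exp_add]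
  congr 1
  nlinarith [hsτ2, hd1]

lemma hasDerivAt_bsCall_S (σ r Ek T t : ℝ) (hσ : 0 < σ) (hE : 0 < Ek) (ht : t < T)
    (S : ℝ) (hS : 0 < S) :
    HasDerivAt (fun S' => bsCall σ r Ek T S' t)
      (normalCDF ((Real.log (S / Ek) + (r + σ ^ 2 / 2) * (T - t)) / (σ * Real.sqrt (T - t)))) S := by
  have hτ : 0 < T - t := by linarith
  set τ := T - t
  set sτ := Real.sqrt τ with hsτdef
  have hsτ : 0 < sτ := Real.sqrt_pos.2 hτ
  have ha : σ * sτ ≠ 0 := by positivity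
  set c := r + σ^2/2 with hcdef
  have hlog : HasDerivAt (fun S' : ℝ => Real.log (S' / Ek)) ((1/Ek) / (S/Ek)) S := by
    have h1 : HasDerivAt (fun S' : ℝ => S' / Ek) (1/Ek) S := by
      simpa using (hasDerivAt_id S).div_const Ek
    exact h1.log (by positivity)
  set D1' := ((1/Ek) / (S/Ek)) / (σ * sτ) with hD1'def
  have hd1 : HasDerivAt (fun S' : ℝ => (Real.log (S'/Ek) + c*τ)/(σ*sτ)) D1' S :=
    (hlog.add_const (c*τ)).div_const _
  have hd2 : HasDerivAt (fun S' : ℝ => (Real.log (S'/Ek) + c*τ)/(σ*sτ) - σ*sτ) D1' S :=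
    hd1.sub_const _
  set d1 := (Real.log (S/Ek) + c*τ)/(σ*sτ) with hd1v
  have hN1 : HasDerivAt (fun S' : ℝ => normalCDF ((Real.log (S'/Ek) + c*τ)/(σ*sτ)))
      (nPDF d1 * D1') S := (hasDerivAt_normalCDF d1).comp (h := fun S' : ℝ => (Real.log (S'/Ek) + c*τ)/(σ*sτ)) S hd1
  have hN2 : HasDerivAt (fun S' : ℝ => normalCDF ((Real.log (S'/Ek) + c*τ)/(σ*sτ) - σ*sτ))
      (nPDF (d1 - σ*sτ) * D1') S := (hasDerivAt_normalCDF (d1 - σ*sτ)).comp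
        (h := fun S' : ℝ => (Real.log (S'/Ek) + c*τ)/(σ*sτ) - σ*sτ) S hd2
  have hV : HasDerivAt (fun S' => bsCall σ r Ek T S' t)
      ((1 * normalCDF d1 + S * (nPDF d1 * D1')) - Ek * Real.exp (-r*τ) * (nPDF (d1 - σ*sτ) * D1')) S := by
    have := ((hasDerivAt_id' S).mul hN1).sub (hN2.const_mul (Ek * Real.exp (-r*τ)))
    exact this
  have hkey := key σ r Ek τ S hσ hE hτ hS
  have : (1 * normalCDF d1 + S * (nPDF d1 * D1')) - Ek * Real.exp (-r*τ) * (nPDF (d1 - σ*sτ) * D1')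
      = normalCDF d1 := by
    rw [← hsτdef] at hkey
    rw [hd1v, hcdef]
    linear_combination D1' * hkey
  rw [this] at hV
  exact hV

lemma hasDerivAt_N_d1 (σ r Ek T t : ℝ) (hσ : 0 < σ) (hE : 0 < Ek) (ht : t < T)
    (S : ℝ) (hS : 0 < S) :
    HasDerivAt (fun S' : ℝ => normalCDF ((Real.log (S' / Ek) + (r + σ ^ 2 / 2) * (T - t)) / (σ * Real.sqrt (T - t))))
      (nPDF ((Real.log (S / Ek) + (r + σ ^ 2 / 2) * (T - t)) / (σ * Real.sqrt (T - t)))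
        / (S * (σ * Real.sqrt (T - t)))) S := by
  have hτ : 0 < T - t := by linarith
  have hsτ : 0 < Real.sqrt (T - t) := Real.sqrt_pos.2 hτ
  have hlog : HasDerivAt (fun S' : ℝ => Real.log (S' / Ek)) ((1/Ek) / (S/Ek)) S := by
    have h1 : HasDerivAt (fun S' : ℝ => S' / Ek) (1/Ek) S := by
      simpa using (hasDerivAt_id S).div_const Ek
    exact h1.log (by positivity)
  have hd1 : HasDerivAt
      (fun S' : ℝ => (Real.log (S'/Ek) + (r + σ ^ 2 / 2)*(T-t))/(σ*Real.sqrt (T-t)))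
      (((1/Ek) / (S/Ek)) / (σ * Real.sqrt (T-t))) S :=
    (hlog.add_const _).div_const _
  have h := (hasDerivAt_normalCDF _).comp
    (h := fun S' : ℝ => (Real.log (S'/Ek) + (r + σ ^ 2 / 2)*(T-t))/(σ*Real.sqrt (T-t))) S hd1
  refine h.congr_deriv ?_
  field_simp

lemma hasDerivAt_bsCall_t (σ r Ek T t : ℝ) (hσ : 0 < σ) (hE : 0 < Ek) (ht : t < T)
    (S : ℝ) (hS : 0 < S) :
    HasDerivAt (fun t' => bsCall σ r Ek T S t')
      (-(S * nPDF ((Real.log (S / Ek) + (r + σ ^ 2 / 2) * (T - t)) / (σ * Real.sqrt (T - t)))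
          * σ / (2 * Real.sqrt (T - t)))
        - r * Ek * Real.exp (-r * (T - t)) *
          normalCDF ((Real.log (S / Ek) + (r + σ ^ 2 / 2) * (T - t)) / (σ * Real.sqrt (T - t))
            - σ * Real.sqrt (T - t))) t := by
  have hτ : 0 < T - t := by linarith
  have hsτ : 0 < Real.sqrt (T - t) := Real.sqrt_pos.2 hτ
  have hτ' : HasDerivAt (fun t' : ℝ => T - t') (-1) t := by
    simpa using (hasDerivAt_id t).const_sub T
  have hsq : HasDerivAt (fun t' : ℝ => Real.sqrt (T - t')) (1 / (2 * Real.sqrt (T - t)) * (-1)) t :=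
    (Real.hasDerivAt_sqrt hτ.ne').comp t hτ'
  have hnum : HasDerivAt (fun t' : ℝ => Real.log (S / Ek) + (r + σ ^ 2 / 2) * (T - t')) ((r + σ ^ 2 / 2) * (-1)) t :=
    (hτ'.const_mul (r + σ ^ 2 / 2)).const_add (Real.log (S / Ek))
  have hden : HasDerivAt (fun t' : ℝ => σ * Real.sqrt (T - t'))
      (σ * (1 / (2 * Real.sqrt (T - t)) * (-1))) t := hsq.const_mul σ
  have hdenne : σ * Real.sqrt (T - t) ≠ 0 := by positivity
  set sτ := Real.sqrt (T - t) with hsτdef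
  set E1' := ((r + σ ^ 2 / 2) * (-1) * (σ * sτ) - (Real.log (S / Ek) + (r + σ ^ 2 / 2) * (T - t)) * (σ * (1 / (2 * sτ) * (-1)))) / (σ * sτ)^2
    with hE1'def
  have he1 : HasDerivAt (fun t' : ℝ => (Real.log (S / Ek) + (r + σ ^ 2 / 2) * (T - t')) / (σ * Real.sqrt (T - t'))) E1' t :=
    hnum.div hden hdenne
  set E2' := E1' - σ * (1 / (2 * sτ) * (-1)) with hE2'def
  have he2 : HasDerivAt
      (fun t' : ℝ => (Real.log (S / Ek) + (r + σ ^ 2 / 2) * (T - t')) / (σ * Real.sqrt (T - t')) - σ * Real.sqrt (T - t'))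
      E2' t := he1.sub (hsq.const_mul σ)
  set d1 := (Real.log (S / Ek) + (r + σ ^ 2 / 2) * (T - t)) / (σ * sτ) with hd1def
  have hN1 : HasDerivAt (fun t' : ℝ => normalCDF ((Real.log (S / Ek) + (r + σ ^ 2 / 2) * (T - t')) / (σ * Real.sqrt (T - t'))))
      (nPDF d1 * E1') t := (hasDerivAt_normalCDF d1).comp
        (h := fun t' : ℝ => (Real.log (S / Ek) + (r + σ ^ 2 / 2) * (T - t')) / (σ * Real.sqrt (T - t'))) t he1
  have hN2 : HasDerivAt (fun t' : ℝ =>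
      normalCDF ((Real.log (S / Ek) + (r + σ ^ 2 / 2) * (T - t')) / (σ * Real.sqrt (T - t')) - σ * Real.sqrt (T - t')))
      (nPDF (d1 - σ * sτ) * E2') t := (hasDerivAt_normalCDF (d1 - σ * sτ)).comp
        (h := fun t' : ℝ => (Real.log (S / Ek) + (r + σ ^ 2 / 2) * (T - t')) / (σ * Real.sqrt (T - t')) - σ * Real.sqrt (T - t')) t he2
  have hexp : HasDerivAt (fun t' : ℝ => Real.exp (-r * (T - t')))
      (Real.exp (-r * (T - t)) * (-r * -1)) t := by
    exact ((hτ'.const_mul (-r)).exp)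
  have hV : HasDerivAt (fun t' => bsCall σ r Ek T S t')
      (S * (nPDF d1 * E1')
        - (Ek * (Real.exp (-r * (T - t)) * (-r * -1)) * normalCDF (d1 - σ * sτ)
           + Ek * Real.exp (-r * (T - t)) * (nPDF (d1 - σ * sτ) * E2'))) t := by
    exact (hN1.const_mul S).sub ((hexp.const_mul Ek).mul hN2)
  have hkey := key σ r Ek (T - t) S hσ hE hτ hS
  rw [← hsτdef, ← hd1def] at hkey
  have heq : S * (nPDF d1 * E1')
        - (Ek * (Real.exp (-r * (T - t)) * (-r * -1)) * normalCDF (d1 - σ * sτ)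
           + Ek * Real.exp (-r * (T - t)) * (nPDF (d1 - σ * sτ) * E2'))
      = -(S * nPDF d1 * σ / (2 * sτ))
        - r * Ek * Real.exp (-r * (T - t)) * normalCDF (d1 - σ * sτ) := by
    rw [hE2'def]
    simp only [neg_mul] at hkey ⊢
    field_simp
    linear_combination (2 * sτ * E1' + σ) * hkey
  rw [heq] at hV
  exact hV

theorem stmt11 (σ r Ek T : ℝ) (hσ : 0 < σ) (hE : 0 < Ek) (S t : ℝ) (hS : 0 < S) (ht : t < T) :
    deriv (fun t' => bsCall σ r Ek T S t') t
      + 1 / 2 * σ ^ 2 * S ^ 2 * iteratedDeriv 2 (fun S' => bsCall σ r Ek T S' t) S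
      + r * S * deriv (fun S' => bsCall σ r Ek T S' t) S
      - r * bsCall σ r Ek T S t = 0 := by
  have hτ : 0 < T - t := by linarith
  have hsτ : 0 < Real.sqrt (T - t) := Real.sqrt_pos.2 hτ
  have h2nd : iteratedDeriv 2 (fun S' => bsCall σ r Ek T S' t) S
      = nPDF ((Real.log (S / Ek) + (r + σ ^ 2 / 2) * (T - t)) / (σ * Real.sqrt (T - t)))
        / (S * (σ * Real.sqrt (T - t))) := by
    rw [show (2:ℕ) = 1 + 1 from rfl, iteratedDeriv_succ, iteratedDeriv_one]
    have hev : (deriv fun S' => bsCall σ r Ek T S' t)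
        =ᶠ[nhds S] fun S' => normalCDF ((Real.log (S' / Ek) + (r + σ ^ 2 / 2) * (T - t)) / (σ * Real.sqrt (T - t))) := by
      filter_upwards [eventually_gt_nhds hS] with x hx
      exact (hasDerivAt_bsCall_S σ r Ek T t hσ hE ht x hx).deriv
    rw [hev.deriv_eq]
    exact (hasDerivAt_N_d1 σ r Ek T t hσ hE ht S hS).deriv
  rw [h2nd, (hasDerivAt_bsCall_t σ r Ek T t hσ hE ht S hS).deriv,
    (hasDerivAt_bsCall_S σ r Ek T t hσ hE ht S hS).deriv]
  unfold bsCall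
  field_simp
  ring
end
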